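/- For every integer l with 49n/50 ≤ l ≤ 51n/50, if y = (y₂,…,y_{2n−1}) ∈ {0,1}^{2n−2} is chosen uniformly at random among vectors of Hamming weight l, then the probability that the number of indices i ∈ [n−1] with y_{2i} = y_{2i+1} = 1 is at least 49n/100 tends to 0 as n → ∞ (indeed is o(1/n)). -/

import Mathlib

open Finset

/-- The number of indices `i ∈ [n-1]` whose pair of positions `(2i, 2i+1)`
(1-indexed: `(y_{2i}, y_{2i+1})`) are both occupied by the set `S`. -/
def pairCount (n : ℕ) (S : Finset (Fin (2*n-2))) : ℕ :=
  (Finset.univ.filter (fun i : Fin (n-1) =>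
    (⟨2*i.val, by have := i.isLt; omega⟩ : Fin (2*n-2)) ∈ S ∧
    (⟨2*i.val+1, by have := i.isLt; omega⟩ : Fin (2*n-2)) ∈ S)).card

/-- The probability that a uniformly random weight-`l` vector in `{0,1}^{2n-2}`
has at least `49n/100` fully-occupied pairs. -/
noncomputable def badProb (n l : ℕ) : ℝ :=
  ((((Finset.univ : Finset (Finset (Fin (2*n-2)))).filter
      (fun S => S.card = l ∧ 49 * n ≤ 100 * pairCount n S)).card : ℕ) : ℝ) /
    (((2*n-2).choose l : ℕ) : ℝ)

/-- Any binomial coefficient is at most `2 ^ n`. -/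
lemma aux_choose_le_two_pow (n k : ℕ) : n.choose k ≤ 2 ^ n := by
  rcases le_or_gt k n with h | h
  · calc n.choose k ≤ ∑ i ∈ range (n+1), n.choose i :=
          Finset.single_le_sum (fun i _ => Nat.zero_le _) (by simp [Nat.lt_succ_of_le h])
      _ = 2 ^ n := Nat.sum_range_choose n
  · simp [Nat.choose_eq_zero_of_lt h]

/-- The number of `l`-subsets containing a fixed set `A`. -/
lemma aux_count_superset_le {α : Type*} [Fintype α] [DecidableEq α] (A : Finset α) (l : ℕ) :
    ((Finset.univ : Finset (Finset α)).filter (fun S => S.card = l ∧ A ⊆ S)).card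
      ≤ (Fintype.card α - A.card).choose (l - A.card) := by
  refine le_trans (Finset.card_le_card_of_injOn (fun S => S \ A)
    (t := Finset.powersetCard (l - A.card) Aᶜ) ?_ ?_) ?_
  · intro S hS
    simp only [Finset.mem_coe, mem_filter, mem_univ, true_and] at hS
    obtain ⟨hcard, hsub⟩ := hS
    show S \ A ∈ Finset.powersetCard (l - A.card) Aᶜ
    refine Finset.mem_powersetCard.2 ⟨?_, ?_⟩
    · intro x hx
      simp only [Finset.mem_sdiff] at hx
      simpa [Finset.mem_compl] using hx.2
    · rw [Finset.card_sdiff_of_subset hsub, hcard]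
  · intro S1 hS1 S2 hS2 hEq
    simp only [coe_filter, Set.mem_setOf_eq, mem_univ, true_and] at hS1 hS2
    have h1 : S1 \ A ∪ A = S1 := Finset.sdiff_union_of_subset hS1.2
    have h2 : S2 \ A ∪ A = S2 := Finset.sdiff_union_of_subset hS2.2
    rw [← h1, ← h2]
    exact congrArg (· ∪ A) hEq
  · rw [Finset.card_powersetCard, Finset.card_compl]

/-- Counting bound: the number of bad sets is at most
`C(n-1,k) * C(2n-2-2k, l-2k)`. -/
lemma aux_badcount_le (n l k : ℕ) (hk : 100 * k ≤ 49 * n) :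
    ((Finset.univ : Finset (Finset (Fin (2*n-2)))).filter
      (fun S => S.card = l ∧ 49 * n ≤ 100 * pairCount n S)).card
      ≤ (n-1).choose k * (2*n-2-2*k).choose (l-2*k) := by
  classical
  set p₁ : Fin (n-1) → Fin (2*n-2) := fun i => ⟨2*i.val, by have := i.isLt; omega⟩ with hp₁
  set p₂ : Fin (n-1) → Fin (2*n-2) := fun i => ⟨2*i.val+1, by have := i.isLt; omega⟩ with hp₂
  have hp₁inj : Function.Injective p₁ := by
    intro i j h
    simp only [hp₁, Fin.mk.injEq] at h
    exact Fin.ext (by omega)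
  have hp₂inj : Function.Injective p₂ := by
    intro i j h
    simp only [hp₂, Fin.mk.injEq] at h
    exact Fin.ext (by omega)
  have hcover : ((Finset.univ : Finset (Finset (Fin (2*n-2)))).filter
      (fun S => S.card = l ∧ 49 * n ≤ 100 * pairCount n S)) ⊆
      (Finset.powersetCard k (Finset.univ : Finset (Fin (n-1)))).biUnion
        (fun T => (Finset.univ : Finset (Finset (Fin (2*n-2)))).filter
          (fun S => S.card = l ∧ (T.image p₁ ∪ T.image p₂) ⊆ S)) := by
    intro S hS
    simp only [mem_filter, mem_univ, true_and] at hS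
    obtain ⟨hcard, hpc⟩ := hS
    have hk' : k ≤ (Finset.univ.filter (fun i : Fin (n-1) =>
        (⟨2*i.val, by have := i.isLt; omega⟩ : Fin (2*n-2)) ∈ S ∧
        (⟨2*i.val+1, by have := i.isLt; omega⟩ : Fin (2*n-2)) ∈ S)).card := by
      have : k ≤ pairCount n S := by unfold pairCount at hpc ⊢; omega
      exact this
    obtain ⟨T, hTsub, hTcard⟩ := Finset.exists_subset_card_eq hk'
    refine Finset.mem_biUnion.2 ⟨T, ?_, ?_⟩
    · exact Finset.mem_powersetCard.2 ⟨Finset.subset_univ T, hTcard⟩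
    · simp only [mem_filter, mem_univ, true_and]
      refine ⟨hcard, ?_⟩
      intro x hx
      rcases Finset.mem_union.1 hx with hx | hx
      · obtain ⟨i, hiT, rfl⟩ := Finset.mem_image.1 hx
        exact ((Finset.mem_filter.1 (hTsub hiT)).2).1
      · obtain ⟨i, hiT, rfl⟩ := Finset.mem_image.1 hx
        exact ((Finset.mem_filter.1 (hTsub hiT)).2).2
  calc ((Finset.univ : Finset (Finset (Fin (2*n-2)))).filter
      (fun S => S.card = l ∧ 49 * n ≤ 100 * pairCount n S)).card
      ≤ ((Finset.powersetCard k (Finset.univ : Finset (Fin (n-1)))).biUnion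
        (fun T => (Finset.univ : Finset (Finset (Fin (2*n-2)))).filter
          (fun S => S.card = l ∧ (T.image p₁ ∪ T.image p₂) ⊆ S))).card :=
        Finset.card_le_card hcover
    _ ≤ ∑ T ∈ Finset.powersetCard k (Finset.univ : Finset (Fin (n-1))),
        ((Finset.univ : Finset (Finset (Fin (2*n-2)))).filter
          (fun S => S.card = l ∧ (T.image p₁ ∪ T.image p₂) ⊆ S)).card :=
        Finset.card_biUnion_le
    _ ≤ ∑ T ∈ Finset.powersetCard k (Finset.univ : Finset (Fin (n-1))),
        (2*n-2-2*k).choose (l-2*k) := by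
        refine Finset.sum_le_sum (fun T hT => ?_)
        have hTcard : T.card = k := (Finset.mem_powersetCard.1 hT).2
        have hdisj : Disjoint (T.image p₁) (T.image p₂) := by
          rw [Finset.disjoint_left]
          intro a ha hb
          obtain ⟨i, _, rfl⟩ := Finset.mem_image.1 ha
          obtain ⟨j, _, hj⟩ := Finset.mem_image.1 hb
          simp only [hp₁, hp₂, Fin.mk.injEq] at hj
          omega
        have hAcard : (T.image p₁ ∪ T.image p₂).card = 2*k := by
          rw [Finset.card_union_of_disjoint hdisj,
            Finset.card_image_of_injective _ hp₁inj,
            Finset.card_image_of_injective _ hp₂inj, hTcard]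
          ring
        have h := aux_count_superset_le (T.image p₁ ∪ T.image p₂) l
        rwa [hAcard, Fintype.card_fin] at h
    _ = (n-1).choose k * (2*n-2-2*k).choose (l-2*k) := by
        rw [Finset.sum_const, Finset.card_powersetCard, Finset.card_univ, Fintype.card_fin,
          smul_eq_mul]

/-- The key per-`n` estimate. -/
lemma aux_badProb_le (n l : ℕ) (hn : 1000 ≤ n) (h1 : 49*n ≤ 50*l) (h2 : 50*l ≤ 51*n) :
    badProb n l ≤ 2^n * (1/5 : ℝ)^(12*n/25) := by
  set k := 12*n/25 with hkdef
  set N := 2*n-2 with hNdef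
  have hk49 : 100 * k ≤ 49 * n := by omega
  have h2kl : 2*k ≤ l := by omega
  have hlN : l ≤ N := by omega
  have h2kN : 2*k ≤ N := by omega
  have hNl_pos : (0:ℝ) < (N.choose l : ℝ) := by
    exact_mod_cast Nat.choose_pos hlN
  have hN2k_pos : (0:ℝ) < (N.choose (2*k) : ℝ) := by
    exact_mod_cast Nat.choose_pos h2kN
  -- key ratio bound
  have hr : (l.choose (2*k) : ℝ) ≤ (1/5 : ℝ)^k * (N.choose (2*k) : ℝ) := by
    have hfact : (0:ℝ) < (Nat.factorial (2*k) : ℝ) := by exact_mod_cast Nat.factorial_pos (2*k)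
    rw [← mul_le_mul_iff_right₀ hfact]
    have hdl : (Nat.factorial (2*k) : ℝ) * (l.choose (2*k) : ℝ) = (l.descFactorial (2*k) : ℝ) := by
      rw [← Nat.cast_mul, Nat.descFactorial_eq_factorial_mul_choose]
    have hdN : (Nat.factorial (2*k) : ℝ) * (N.choose (2*k) : ℝ) = (N.descFactorial (2*k) : ℝ) := by
      rw [← Nat.cast_mul, Nat.descFactorial_eq_factorial_mul_choose]
    rw [hdl, mul_left_comm, hdN]
    rw [Nat.descFactorial_eq_prod_range, Nat.descFactorial_eq_prod_range]
    push_cast [Nat.cast_prod]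
    have hLsub : ∀ i ∈ range (2*k), ((l - i : ℕ) : ℝ) = (l:ℝ) - i := by
      intro i hi
      have : i ≤ l := le_trans (le_of_lt (mem_range.1 hi)) h2kl
      push_cast [Nat.cast_sub this]; ring
    have hNsub : ∀ i ∈ range (2*k), ((N - i : ℕ) : ℝ) = (N:ℝ) - i := by
      intro i hi
      have : i ≤ N := le_trans (le_of_lt (mem_range.1 hi)) h2kN
      push_cast [Nat.cast_sub this]; ring
    rw [Finset.prod_congr rfl hLsub, Finset.prod_congr rfl hNsub]
    have h2k : 2*k = k + k := by ring
    rw [h2k, Finset.prod_range_add, Finset.prod_range_add]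
    push_cast
    -- real arithmetic facts
    have hnR : (1000:ℝ) ≤ (n:ℝ) := by exact_mod_cast hn
    have h1R : 49*(n:ℝ) ≤ 50*(l:ℝ) := by exact_mod_cast h1
    have h2R : 50*(l:ℝ) ≤ 51*(n:ℝ) := by exact_mod_cast h2
    have hkR1 : 25*(k:ℝ) ≤ 12*(n:ℝ) := by exact_mod_cast (by omega : 25*k ≤ 12*n)
    have hkR2 : 12*(n:ℝ) ≤ 25*(k:ℝ) + 24 := by exact_mod_cast (by omega : 12*n ≤ 25*k + 24)
    have hNR : (N:ℝ) = 2*(n:ℝ) - 2 := by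
      rw [hNdef]; push_cast [Nat.cast_sub (by omega : 2 ≤ 2*n)]; ring
    have h2klR : 2*(k:ℝ) ≤ (l:ℝ) := by exact_mod_cast h2kl
    -- first block: each factor ≤ (13/25) * (N - i)
    have hA : ∏ i ∈ range k, ((l:ℝ) - i) ≤ ∏ i ∈ range k, (13/25) * ((N:ℝ) - i) := by
      refine Finset.prod_le_prod (fun i hi => ?_) (fun i hi => ?_)
      · have hik : (i:ℝ) ≤ (k:ℝ) := by
          exact_mod_cast le_of_lt (mem_range.1 hi)
        linarith
      · have hik : (i:ℝ) ≤ (k:ℝ) := by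
          exact_mod_cast le_of_lt (mem_range.1 hi)
        have hi0 : (0:ℝ) ≤ (i:ℝ) := Nat.cast_nonneg i
        linarith
    have hB : ∏ i ∈ range k, ((l:ℝ) - (k + i)) ≤
        ∏ i ∈ range k, (7/19) * ((N:ℝ) - (k + i)) := by
      refine Finset.prod_le_prod (fun i hi => ?_) (fun i hi => ?_)
      · have hik : (i:ℝ) ≤ (k:ℝ) := by
          exact_mod_cast le_of_lt (mem_range.1 hi)
        push_cast
        linarith
      · have hik : (i:ℝ) ≤ (k:ℝ) := by
          exact_mod_cast le_of_lt (mem_range.1 hi)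
        have hi0 : (0:ℝ) ≤ (i:ℝ) := Nat.cast_nonneg i
        push_cast
        linarith
    have hA' : ∏ i ∈ range k, (13/25 : ℝ) * ((N:ℝ) - i)
        = (13/25:ℝ)^k * ∏ i ∈ range k, ((N:ℝ) - i) := by
      rw [Finset.prod_mul_distrib, Finset.prod_const, Finset.card_range]
    have hB' : ∏ i ∈ range k, (7/19 : ℝ) * ((N:ℝ) - (k + i))
        = (7/19:ℝ)^k * ∏ i ∈ range k, ((N:ℝ) - (k + i)) := by
      rw [Finset.prod_mul_distrib, Finset.prod_const, Finset.card_range]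
    have hNA_nonneg : (0:ℝ) ≤ ∏ i ∈ range k, ((N:ℝ) - i) := by
      refine Finset.prod_nonneg (fun i hi => ?_)
      have hik : (i:ℝ) ≤ (k:ℝ) := by exact_mod_cast le_of_lt (mem_range.1 hi)
      linarith
    have hNB_nonneg : (0:ℝ) ≤ ∏ i ∈ range k, ((N:ℝ) - (k + i)) := by
      refine Finset.prod_nonneg (fun i hi => ?_)
      have hik : (i:ℝ) ≤ (k:ℝ) := by exact_mod_cast le_of_lt (mem_range.1 hi)
      push_cast
      linarith
    have hLA_nonneg : (0:ℝ) ≤ ∏ i ∈ range k, ((l:ℝ) - (k + i)) := by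
      refine Finset.prod_nonneg (fun i hi => ?_)
      have hik : (i:ℝ) ≤ (k:ℝ) := by exact_mod_cast le_of_lt (mem_range.1 hi)
      push_cast
      linarith
    have hLfirst_nonneg : (0:ℝ) ≤ ∏ i ∈ range k, ((l:ℝ) - i) := by
      refine Finset.prod_nonneg (fun i hi => ?_)
      have hik : (i:ℝ) ≤ (k:ℝ) := by exact_mod_cast le_of_lt (mem_range.1 hi)
      linarith
    calc (∏ i ∈ range k, ((l:ℝ) - i)) * ∏ i ∈ range k, ((l:ℝ) - (k + i))
        ≤ ((13/25:ℝ)^k * ∏ i ∈ range k, ((N:ℝ) - i)) *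
          ((7/19:ℝ)^k * ∏ i ∈ range k, ((N:ℝ) - (k + i))) := by
          apply mul_le_mul (hA.trans_eq hA') (hB.trans_eq hB') hLA_nonneg
          positivity
      _ = (13/25 * (7/19) : ℝ)^k *
          ((∏ i ∈ range k, ((N:ℝ) - i)) * ∏ i ∈ range k, ((N:ℝ) - (k + i))) := by
          rw [mul_pow]; ring
      _ ≤ (1/5 : ℝ)^k *
          ((∏ i ∈ range k, ((N:ℝ) - i)) * ∏ i ∈ range k, ((N:ℝ) - (k + i))) := by
          apply mul_le_mul_of_nonneg_right _ (mul_nonneg hNA_nonneg hNB_nonneg)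
          apply pow_le_pow_left₀ (by norm_num) (by norm_num)
      _ = (1/5 : ℝ)^k *
          ((∏ i ∈ range k, ((N:ℝ) - i)) * ∏ i ∈ range k, ((N:ℝ) - (k + i))) := rfl
  -- the choose identity
  have hid : (N.choose l : ℝ) * (l.choose (2*k) : ℝ)
      = (N.choose (2*k) : ℝ) * ((N - 2*k).choose (l - 2*k) : ℝ) := by
    rw [← Nat.cast_mul, ← Nat.cast_mul, Nat.choose_mul h2kl]
  have hstep : ((N - 2*k).choose (l - 2*k) : ℝ) ≤ (1/5 : ℝ)^k * (N.choose l : ℝ) := by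
    rw [← mul_le_mul_iff_right₀ hN2k_pos, ← hid]
    calc (N.choose l : ℝ) * (l.choose (2*k) : ℝ)
        ≤ (N.choose l : ℝ) * ((1/5:ℝ)^k * (N.choose (2*k) : ℝ)) :=
          mul_le_mul_of_nonneg_left hr (le_of_lt hNl_pos)
      _ = (N.choose (2*k) : ℝ) * ((1/5:ℝ)^k * (N.choose l : ℝ)) := by ring
  have hcount := aux_badcount_le n l k hk49
  have hb : ((n-1).choose k : ℝ) ≤ 2^n := by
    calc ((n-1).choose k : ℝ) ≤ ((2^(n-1) : ℕ) : ℝ) := by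
          exact_mod_cast aux_choose_le_two_pow (n-1) k
      _ ≤ ((2^n : ℕ) : ℝ) := by
          exact_mod_cast Nat.pow_le_pow_right (by norm_num) (by omega)
      _ = 2^n := by push_cast; ring
  unfold badProb
  rw [div_le_iff₀ hNl_pos]
  calc (((Finset.univ : Finset (Finset (Fin (2*n-2)))).filter
      (fun S => S.card = l ∧ 49 * n ≤ 100 * pairCount n S)).card : ℝ)
      ≤ ((n-1).choose k : ℝ) * ((N - 2*k).choose (l - 2*k) : ℝ) := by
        exact_mod_cast hcount
    _ ≤ (2^n : ℝ) * ((1/5:ℝ)^k * (N.choose l : ℝ)) := by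
        apply mul_le_mul hb hstep (Nat.cast_nonneg _)
        positivity
    _ = 2^n * (1/5:ℝ)^k * (N.choose l : ℝ) := by ring

/-- For `49n/50 ≤ l ≤ 51n/50`, the probability that a uniformly random
weight-`l` vector has at least `49n/100` fully-occupied pairs is `o(1/n)`. -/
theorem bad_pair_prob_small (l : ℕ → ℕ)
    (hl : ∀ n : ℕ, 2 ≤ n → 49 * n ≤ 50 * l n ∧ 50 * l n ≤ 51 * n) :
    Filter.Tendsto (fun n : ℕ => (n : ℝ) * badProb n (l n))
      Filter.atTop (nhds 0) := by
  set r : ℝ := 2 * (5:ℝ)^(-(12/25) : ℝ) with hrdef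
  have hr0 : (0:ℝ) < r := by positivity
  have hr1 : r < 1 := by
    have h512 : (2:ℝ) < (5:ℝ)^((12/25) : ℝ) := by
      have h1 : ((2:ℝ)^(25:ℕ)) < ((5:ℝ)^(12:ℕ)) := by norm_num
      have h2 : (2:ℝ) = ((2:ℝ)^(25:ℕ))^((1/25:ℝ)) := by
        rw [← Real.rpow_natCast 2 25, ← Real.rpow_mul (by norm_num)]
        norm_num
      have h3 : ((5:ℝ)^((12/25):ℝ)) = ((5:ℝ)^(12:ℕ))^((1/25:ℝ)) := by
        rw [← Real.rpow_natCast 5 12, ← Real.rpow_mul (by norm_num)]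
        norm_num
      rw [h2, h3]
      exact Real.rpow_lt_rpow (by positivity) h1 (by norm_num)
    have h5pos : (0:ℝ) < (5:ℝ)^((12/25) : ℝ) := by positivity
    rw [hrdef, Real.rpow_neg (by norm_num), ← div_eq_mul_inv]
    exact (div_lt_one h5pos).2 h512
  have htend : Filter.Tendsto (fun n : ℕ => 5 * ((n:ℝ) * r^n))
      Filter.atTop (nhds 0) := by
    have hs : Summable (fun n : ℕ => (n:ℝ)^1 * r^n) :=
      summable_pow_mul_geometric_of_norm_lt_one 1
        (by rw [Real.norm_eq_abs, abs_of_pos hr0]; exact hr1)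
    have h0 := hs.tendsto_atTop_zero
    have h0' : Filter.Tendsto (fun n : ℕ => (n:ℝ) * r^n) Filter.atTop (nhds 0) := by
      simpa using h0
    simpa using h0'.const_mul 5
  apply squeeze_zero' (f := fun n : ℕ => (n:ℝ) * badProb n (l n))
    (g := fun n : ℕ => 5 * ((n:ℝ) * r^n)) ?_ ?_ htend
  · filter_upwards [Filter.eventually_ge_atTop 1000] with n hn
    have hnum : (0:ℝ) ≤ badProb n (l n) := by
      unfold badProb; positivity
    positivity
  · filter_upwards [Filter.eventually_ge_atTop 1000] with n hn
    obtain ⟨h1, h2⟩ := hl n (by omega)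
    have hbp := aux_badProb_le n (l n) hn h1 h2
    have hn0 : (0:ℝ) ≤ (n:ℝ) := Nat.cast_nonneg n
    have hkey : (2:ℝ)^n * (1/5:ℝ)^(12*n/25) ≤ 5 * r^n := by
      set k := 12*n/25 with hkdef
      have hk1 : 12*(n:ℝ)/25 - 1 ≤ (k:ℝ) := by
        have : 12*n ≤ 25*k + 24 := by omega
        have := (by exact_mod_cast this : 12*(n:ℝ) ≤ 25*(k:ℝ) + 24)
        linarith
      have h15 : (1/5:ℝ)^k = (5:ℝ)^(-(k:ℝ)) := by
        rw [Real.rpow_neg (by norm_num), Real.rpow_natCast, one_div, inv_pow]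
      have hmono : (5:ℝ)^(-(k:ℝ)) ≤ (5:ℝ)^(1 - 12*(n:ℝ)/25) := by
        apply Real.rpow_le_rpow_left_iff (by norm_num : (1:ℝ) < 5) |>.2
        linarith
      have hsplit : (5:ℝ)^(1 - 12*(n:ℝ)/25)
          = 5 * ((5:ℝ)^(-(12/25):ℝ))^n := by
        rw [Real.rpow_sub (by norm_num), Real.rpow_one, div_eq_mul_inv]
        congr 1
        rw [← Real.rpow_natCast ((5:ℝ)^(-(12/25):ℝ)) n, ← Real.rpow_mul (by norm_num),
          show (-(12/25):ℝ) * (n:ℕ) = -(12*(n:ℝ)/25) by ring,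
          Real.rpow_neg (by norm_num)]
      calc (2:ℝ)^n * (1/5:ℝ)^k ≤ (2:ℝ)^n * (5 * ((5:ℝ)^(-(12/25):ℝ))^n) := by
            apply mul_le_mul_of_nonneg_left _ (by positivity)
            rw [h15]
            exact hmono.trans_eq hsplit
        _ = 5 * (2 * (5:ℝ)^(-(12/25):ℝ))^n := by
            rw [mul_pow]; ring
        _ = 5 * r^n := by rw [hrdef]
    calc (n:ℝ) * badProb n (l n) ≤ (n:ℝ) * ((2:ℝ)^n * (1/5:ℝ)^(12*n/25)) :=
          mul_le_mul_of_nonneg_left hbp hn0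
      _ ≤ (n:ℝ) * (5 * r^n) := mul_le_mul_of_nonneg_left hkey hn0
      _ = 5 * ((n:ℝ) * r^n) := by ring
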